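/- For every class-K∞ function γ there exists a class-K∞ function σ such that γ(r·s) ≤ σ(r)·σ(s) for all r, s ≥ 0. -/

import Mathlib

/-- A function of class `K`: continuous, strictly increasing on `[0,∞)`, zero at zero. -/
def ClassK (f : ℝ → ℝ) : Prop :=
  ContinuousOn f (Set.Ici 0) ∧ StrictMonoOn f (Set.Ici 0) ∧ f 0 = 0

/-- A function of class `K∞`: class `K` and unbounded. -/
def ClassKInf (f : ℝ → ℝ) : Prop :=
  ClassK f ∧ Filter.Tendsto f Filter.atTop Filter.atTop

/-- A function of class `KL`. -/
def ClassKL (β : ℝ → ℝ → ℝ) : Prop :=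
  (∀ t, 0 ≤ t → ClassK (fun r => β r t)) ∧
  (∀ r, 0 ≤ r → AntitoneOn (fun t => β r t) (Set.Ici 0) ∧
    Filter.Tendsto (fun t => β r t) Filter.atTop (nhds 0))

open Real Filter Set Topology

lemma aux_two_zpow {n : ℤ} (hn : n ≤ -1) : (2:ℝ)^n * (-(n:ℝ)) ≤ 1 := by
  obtain ⟨k, rfl⟩ : ∃ k : ℕ, n = -(k:ℤ) := ⟨(-n).toNat, by omega⟩
  have h1 : (k:ℝ) ≤ 2^k := by exact_mod_cast (Nat.lt_two_pow_self (n := k)).le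
  have h2 : (0:ℝ) < 2^k := by positivity
  rw [zpow_neg, zpow_natCast, show (-((-(k:ℤ):ℤ):ℝ)) = (k:ℝ) by push_cast; ring]
  calc (2^k:ℝ)⁻¹ * k ≤ (2^k:ℝ)⁻¹ * 2^k := by gcongr
    _ = 1 := inv_mul_cancel₀ h2.ne'

lemma exists_convex_majorant (g : ℝ → ℝ) (hg : Monotone g)
    (hbot : Tendsto g atBot atBot) :
    ∃ τ : ℝ → ℝ, Continuous τ ∧ Monotone τ ∧ (∀ u, g u ≤ τ u) ∧
      (∀ a b : ℝ, τ ((a+b)/2) ≤ (τ a + τ b)/2) ∧ Tendsto τ atBot atBot := by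
  set G : ℤ → ℝ := fun n => g ((n:ℝ) + 1) with hG
  set c : ℤ → ℝ := fun n => if 0 ≤ n then 1 + |G n| else (2:ℝ)^(n:ℤ) / (1 + |G n|) with hc
  set L : ℤ → ℝ → ℝ := fun n u => G n + c n * (u - n) with hL
  set τ : ℝ → ℝ := fun u => ⨆ n : ℤ, L n u with hτ
  have hGmono : Monotone G := by
    intro m n h
    apply hg
    have h2 : (m:ℝ) ≤ n := by exact_mod_cast h
    linarith
  have hc0 : ∀ n, 0 < c n := by
    intro n
    by_cases h : 0 ≤ n
    · simp only [hc, h, if_true]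
      positivity
    · simp only [hc, h, if_false]
      exact div_pos (zpow_pos (by norm_num) n) (by positivity)
  -- uniform upper bound on lines
  have hub : ∀ u n, L n u ≤ |G 0| + |G (max 0 ⌈u⌉)| + (1 + |G 0| + |G (max 0 ⌈u⌉)|) * (|u| + 1) + 2 := by
    intro u n
    set M : ℤ := max 0 ⌈u⌉ with hM
    have hB0 : (0:ℝ) ≤ (1 + |G 0| + |G M|) * (|u| + 1) := by positivity
    by_cases hn : 0 ≤ n
    · have hcn : c n = 1 + |G n| := by simp [hc, hn]
      by_cases hnM : n ≤ M
      · have h1 : G n ≤ G M := hGmono hnM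
        have h2 : |G n| ≤ |G 0| + |G M| := by
          have := hGmono hn
          rw [abs_le]
          constructor
          · nlinarith [neg_abs_le (G 0), le_abs_self (G M), abs_nonneg (G 0), abs_nonneg (G M)]
          · nlinarith [le_abs_self (G M), abs_nonneg (G 0)]
        rcases le_total u (n:ℝ) with h | h
        · have : c n * (u - n) ≤ 0 := mul_nonpos_of_nonneg_of_nonpos (hc0 n).le (by linarith)
          have : L n u ≤ G n := by simp only [hL]; linarith
          nlinarith [le_abs_self (G M), abs_nonneg (G 0), abs_nonneg (G M)]
        · have hun : u - (n:ℝ) ≤ |u| + 1 := by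
            have : (0:ℝ) ≤ n := by exact_mod_cast hn
            have := le_abs_self u
            linarith
          have : c n * (u - n) ≤ (1 + |G 0| + |G M|) * (|u| + 1) := by
            rw [hcn]
            apply mul_le_mul (by linarith) hun (by linarith) (by positivity)
          simp only [hL]
          nlinarith [le_abs_self (G M), abs_nonneg (G 0), abs_nonneg (G M)]
      · push_neg at hnM
        have h1 : (M:ℝ) + 1 ≤ n := by exact_mod_cast hnM
        have h2 : u ≤ (M:ℝ) := by
          have : (⌈u⌉:ℤ) ≤ M := le_max_right _ _
          have h3 : ((⌈u⌉:ℤ):ℝ) ≤ (M:ℝ) := by exact_mod_cast this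
          linarith [Int.le_ceil u]
        have h3 : u - (n:ℝ) ≤ -1 := by linarith
        have : c n * (u - n) ≤ c n * (-1) := by
          apply mul_le_mul_of_nonneg_left h3 (hc0 n).le
        have h4 : L n u ≤ G n - (1 + |G n|) := by
          simp only [hL]; rw [hcn] at this ⊢; linarith
        nlinarith [le_abs_self (G n), abs_nonneg (G n), abs_nonneg (G 0), abs_nonneg (G M)]
    · push_neg at hn
      have hn1 : n ≤ -1 := by omega
      have hcn : c n = (2:ℝ)^(n:ℤ) / (1 + |G n|) := by simp [hc, not_le.mpr hn]
      have hGn0 : G n ≤ G 0 := hGmono hn.le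
      rcases le_total u (n:ℝ) with h | h
      · have : c n * (u - n) ≤ 0 := mul_nonpos_of_nonneg_of_nonpos (hc0 n).le (by linarith)
        simp only [hL]
        nlinarith [le_abs_self (G 0), abs_nonneg (G M)]
      · have hpow1 : (2:ℝ)^(n:ℤ) ≤ 1 := by
          apply zpow_le_one_of_nonpos₀ (by norm_num : (1:ℝ) ≤ 2) (by omega)
        have hpow0 : (0:ℝ) < (2:ℝ)^(n:ℤ) := zpow_pos (by norm_num) n
        have habs : (1:ℝ) ≤ 1 + |G n| := le_add_of_nonneg_right (abs_nonneg _)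
        have step1 : c n * (u - n) ≤ (2:ℝ)^(n:ℤ) * (u - n) := by
          rw [hcn, div_mul_eq_mul_div]
          exact div_le_self (mul_nonneg hpow0.le (by linarith)) habs
        have step2 : (2:ℝ)^(n:ℤ) * (u - n) = (2:ℝ)^(n:ℤ) * u + (2:ℝ)^(n:ℤ) * (-(n:ℝ)) := by ring
        have step3 : (2:ℝ)^(n:ℤ) * u ≤ |u| := by
          calc (2:ℝ)^(n:ℤ) * u ≤ (2:ℝ)^(n:ℤ) * |u| := by
                apply mul_le_mul_of_nonneg_left (le_abs_self u) hpow0.le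
            _ ≤ 1 * |u| := by apply mul_le_mul_of_nonneg_right hpow1 (abs_nonneg u)
            _ = |u| := one_mul _
        have step4 := aux_two_zpow hn1
        have : L n u ≤ G 0 + |u| + 1 := by
          simp only [hL]; nlinarith
        nlinarith [le_abs_self (G 0), abs_nonneg (G M), abs_nonneg u,
          mul_nonneg (by positivity : (0:ℝ) ≤ |G 0| + |G M|) (by positivity : (0:ℝ) ≤ |u| + 1)]
  have hBdd : ∀ u, BddAbove (Set.range fun n : ℤ => L n u) := by
    intro u
    exact ⟨_, by rintro x ⟨n, rfl⟩; exact hub u n⟩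
  have hgle : ∀ u, g u ≤ τ u := by
    intro u
    have h1 : g u ≤ G ⌊u⌋ := hg (by push_cast; linarith [Int.lt_floor_add_one u])
    have h2 : 0 ≤ c ⌊u⌋ * (u - ⌊u⌋) :=
      mul_nonneg (hc0 _).le (sub_nonneg.2 (Int.floor_le u))
    calc g u ≤ L ⌊u⌋ u := by simp only [hL]; linarith
      _ ≤ τ u := le_ciSup (hBdd u) ⌊u⌋
  have hτmono : Monotone τ := by
    intro u v huv
    apply ciSup_le fun n => ?_
    calc L n u ≤ L n v := by
          simp only [hL]
          have := mul_le_mul_of_nonneg_left (by linarith : u - (n:ℝ) ≤ v - n) (hc0 n).le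
          linarith
      _ ≤ τ v := le_ciSup (hBdd v) n
  have hconv : ConvexOn ℝ Set.univ τ := by
    refine ⟨convex_univ, fun x _ y _ a b ha hb hab => ?_⟩
    simp only [smul_eq_mul]
    apply ciSup_le fun n => ?_
    have h1 : L n (a*x + b*y) = a * L n x + b * L n y := by
      simp only [hL]
      have hb' : b = 1 - a := by linarith
      subst hb'; ring
    rw [h1]
    exact add_le_add (mul_le_mul_of_nonneg_left (le_ciSup (hBdd x) n) ha)
      (mul_le_mul_of_nonneg_left (le_ciSup (hBdd y) n) hb)
  have hτcont : Continuous τ := by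
    rw [← continuousOn_univ]
    exact hconv.continuousOn isOpen_univ
  have hmid : ∀ a b : ℝ, τ ((a+b)/2) ≤ (τ a + τ b)/2 := by
    intro a b
    have := hconv.2 (mem_univ a) (mem_univ b) (by norm_num : (0:ℝ) ≤ 1/2)
      (by norm_num : (0:ℝ) ≤ 1/2) (by norm_num)
    simp only [smul_eq_mul] at this
    calc τ ((a+b)/2) = τ (1/2 * a + 1/2 * b) := by ring_nf
      _ ≤ 1/2 * τ a + 1/2 * τ b := this
      _ = (τ a + τ b)/2 := by ring
  -- atBot
  have hGbot : Tendsto G atBot atBot := by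
    apply hbot.comp
    apply tendsto_atBot_add_const_right
    exact tendsto_intCast_atBot_iff.2 tendsto_id
  have hτbot : Tendsto τ atBot atBot := by
    rw [tendsto_atBot]
    intro K
    have hev : ∀ᶠ n : ℤ in atBot, G n ≤ K - 1 := hGbot.eventually (eventually_le_atBot (K-1))
    rw [eventually_atBot] at hev
    obtain ⟨n₁, hn₁⟩ := hev
    set n₀ : ℤ := min n₁ (-1) with hn₀def
    have hn₀1 : n₀ ≤ -1 := min_le_right _ _
    have hn₀K : ∀ n ≤ n₀, G n ≤ K - 1 := fun n hn => hn₁ n (le_trans hn (min_le_left _ _))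
    set D : ℝ := 1 + |G 0| + |G n₀| with hD
    have hDpos : (0:ℝ) < D := by positivity
    set ε : ℝ := (2:ℝ)^(n₀:ℤ) / D with hε
    have hεpos : 0 < ε := div_pos (zpow_pos (by norm_num) _) hDpos
    set U : ℝ := min (min ((n₀:ℝ)) K) ((n₀:ℝ) - (G 0 - K)/ε) with hU
    rw [eventually_atBot]
    refine ⟨U, fun u hu => ?_⟩
    have hun₀ : u ≤ (n₀:ℝ) := le_trans hu (le_trans (min_le_left _ _) (min_le_left _ _))
    have huK : u ≤ K := le_trans hu (le_trans (min_le_left _ _) (min_le_right _ _))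
    have hu3 : u ≤ (n₀:ℝ) - (G 0 - K)/ε := le_trans hu (min_le_right _ _)
    have hu1 : u ≤ -1 := le_trans hun₀ (by exact_mod_cast hn₀1)
    apply ciSup_le
    intro n
    by_cases hn : 0 ≤ n
    · have hcn : c n = 1 + |G n| := by simp [hc, hn]
      have hun : u - (n:ℝ) ≤ u := by
        have h0 : (0:ℝ) ≤ n := by exact_mod_cast hn
        linarith
      have h1 : c n * (u - n) ≤ c n * u := mul_le_mul_of_nonneg_left hun (hc0 n).le
      have h4 : |G n| * u ≤ |G n| * (-1) := mul_le_mul_of_nonneg_left (by linarith) (abs_nonneg _)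
      have h5 : c n * u = u + |G n| * u := by rw [hcn]; ring
      simp only [hL]
      linarith [le_abs_self (G n)]
    · push_neg at hn
      have hn1 : n ≤ -1 := by omega
      have hcn : c n = (2:ℝ)^(n:ℤ)/(1+|G n|) := by simp [hc, not_le.mpr hn]
      by_cases hnn₀ : n ≤ n₀
      · rcases le_total u (n:ℝ) with h | h
        · have h1 : c n * (u - n) ≤ 0 :=
            mul_nonpos_of_nonneg_of_nonpos (hc0 n).le (by linarith)
          have := hn₀K n hnn₀
          simp only [hL]; linarith
        · have hpow1 : (2:ℝ)^(n:ℤ) ≤ 1 := zpow_le_one_of_nonpos₀ (by norm_num) (by omega)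
          have hpow0 : (0:ℝ) < (2:ℝ)^(n:ℤ) := zpow_pos (by norm_num) n
          have step1 : c n * (u-n) ≤ (2:ℝ)^(n:ℤ) * (u-n) := by
            rw [hcn, div_mul_eq_mul_div]
            exact div_le_self (mul_nonneg hpow0.le (by linarith))
              (le_add_of_nonneg_right (abs_nonneg _))
          have h2 : u - (n:ℝ) ≤ -(n:ℝ) := by linarith
          have step2 : (2:ℝ)^(n:ℤ) * (u-n) ≤ (2:ℝ)^(n:ℤ) * (-(n:ℝ)) :=
            mul_le_mul_of_nonneg_left h2 hpow0.le
          have step3 := aux_two_zpow hn1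
          have := hn₀K n hnn₀
          simp only [hL]; linarith
      · push_neg at hnn₀
        have hGn₀n : G n₀ ≤ G n := hGmono hnn₀.le
        have hGn0 : G n ≤ G 0 := hGmono (by omega)
        have habsn : |G n| ≤ |G 0| + |G n₀| := by
          rw [abs_le]
          constructor
          · linarith [neg_abs_le (G n₀), abs_nonneg (G 0)]
          · linarith [le_abs_self (G 0), abs_nonneg (G n₀)]
        have hcε : ε ≤ c n := by
          rw [hcn, hε]
          apply div_le_div₀ (zpow_pos (by norm_num) n).le
            (zpow_le_zpow_right₀ (by norm_num) hnn₀.le)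
            (by positivity)
          rw [hD]; linarith
        have hun : u ≤ (n:ℝ) := le_trans hun₀ (by exact_mod_cast hnn₀.le)
        have h1 : c n * (u - n) ≤ ε * (u - n) := by
          have hm := mul_nonpos_of_nonneg_of_nonpos (sub_nonneg.2 hcε)
            (by linarith : u - (n:ℝ) ≤ 0)
          nlinarith
        have h2 : ε * (u - n) ≤ ε * (u - (n₀:ℝ)) := by
          apply mul_le_mul_of_nonneg_left ?_ hεpos.le
          have : (n₀:ℝ) ≤ n := by exact_mod_cast hnn₀.le
          linarith
        have hstep : u - (n₀:ℝ) ≤ -((G 0 - K)/ε) := by linarith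
        have h3 : ε * (u - (n₀:ℝ)) ≤ K - G 0 := by
          have hmm := mul_le_mul_of_nonneg_left hstep hεpos.le
          rw [mul_neg, mul_div_cancel₀ _ hεpos.ne'] at hmm
          linarith
        simp only [hL]
        linarith
  exact ⟨τ, hτcont, hτmono, hgle, hmid, hτbot⟩

/-- For every class-K∞ function γ there exists a class-K∞ function σ such that
γ(r·s) ≤ σ(r)·σ(s) for all r, s ≥ 0. -/
theorem stmt0 (γ : ℝ → ℝ) (hγ : ClassKInf γ) :
    ∃ σ : ℝ → ℝ, ClassKInf σ ∧ ∀ r s : ℝ, 0 ≤ r → 0 ≤ s → γ (r * s) ≤ σ r * σ s := by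
  obtain ⟨⟨hcont, hsm, h00⟩, htop⟩ := hγ
  have hγpos : ∀ t : ℝ, 0 < t → 0 < γ t := by
    intro t ht
    have h := hsm self_mem_Ici (mem_Ici.mpr ht.le) ht
    rwa [h00] at h
  set g : ℝ → ℝ := fun u => Real.log (γ (Real.exp (2*u))) / 2 with hgdef
  have hgmono : Monotone g := by
    intro u v huv
    have h1 : Real.exp (2*u) ≤ Real.exp (2*v) := Real.exp_le_exp.mpr (by linarith)
    have h2 : γ (Real.exp (2*u)) ≤ γ (Real.exp (2*v)) :=
      hsm.monotoneOn (mem_Ici.mpr (Real.exp_pos _).le) (mem_Ici.mpr (Real.exp_pos _).le) h1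
    have h3 := Real.log_le_log (hγpos _ (Real.exp_pos _)) h2
    simp only [hgdef]
    linarith
  have h2u_bot : Tendsto (fun u : ℝ => 2*u) atBot atBot :=
    tendsto_atBot_atBot.mpr fun b => ⟨b/2, fun a ha => by linarith⟩
  have h2u_top : Tendsto (fun u : ℝ => 2*u) atTop atTop :=
    tendsto_atTop_atTop.mpr fun b => ⟨b/2, fun a ha => by linarith⟩
  have hgbot : Tendsto g atBot atBot := by
    have h1 : Tendsto (fun u : ℝ => Real.exp (2*u)) atBot (𝓝[>] 0) :=
      Real.tendsto_exp_atBot_nhdsGT.comp h2u_bot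
    have hcw : Tendsto γ (𝓝[Set.Ici 0] 0) (𝓝 0) := by
      have := hcont 0 self_mem_Ici
      rwa [ContinuousWithinAt, h00] at this
    have h2 : Tendsto (fun u : ℝ => γ (Real.exp (2*u))) atBot (𝓝 0) :=
      (hcw.mono_left (nhdsWithin_mono 0 Set.Ioi_subset_Ici_self)).comp h1
    have h3 : Tendsto (fun u : ℝ => γ (Real.exp (2*u))) atBot (𝓝[>] 0) :=
      tendsto_nhdsWithin_iff.mpr ⟨h2, Eventually.of_forall fun u =>
        mem_Ioi.mpr (hγpos _ (Real.exp_pos _))⟩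
    have h4 := Real.tendsto_log_nhdsGT_zero.comp h3
    exact h4.atBot_div_const two_pos
  have hgtop : Tendsto g atTop atTop := by
    have h1 : Tendsto (fun u : ℝ => γ (Real.exp (2*u))) atTop atTop :=
      htop.comp (Real.tendsto_exp_atTop.comp h2u_top)
    exact (Real.tendsto_log_atTop.comp h1).atTop_div_const two_pos
  obtain ⟨τ, hτcont, hτmono, hgle, hmid, hτbot⟩ := exists_convex_majorant g hgmono hgbot
  set T : ℝ → ℝ := fun u => τ u + Real.exp u with hT
  have hTcont : Continuous T := hτcont.add Real.continuous_exp
  have hTsm : StrictMono T := fun a b h =>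
    add_lt_add_of_le_of_lt (hτmono h.le) (Real.exp_lt_exp.mpr h)
  have hTbot : Tendsto T atBot atBot := by
    apply tendsto_atBot_mono' atBot ?_ (tendsto_atBot_add_const_right atBot 1 hτbot)
    filter_upwards [eventually_le_atBot (0:ℝ)] with u hu
    exact add_le_add le_rfl (Real.exp_le_one_iff.mpr hu)
  have hTtop : Tendsto T atTop atTop :=
    tendsto_atTop_mono (fun u => (hgle u).trans (le_add_of_nonneg_right (Real.exp_pos u).le)) hgtop
  set σ : ℝ → ℝ := fun r => if r ≤ 0 then r else Real.exp (T (Real.log r)) with hσdef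
  have hσ0 : σ 0 = 0 := by simp [hσdef]
  have hσpos : ∀ r : ℝ, 0 < r → σ r = Real.exp (T (Real.log r)) := by
    intro r hr
    simp [hσdef, not_le.mpr hr]
  refine ⟨σ, ⟨⟨?_, ?_, hσ0⟩, ?_⟩, ?_⟩
  · -- ContinuousOn
    intro x hx
    rcases eq_or_lt_of_le (mem_Ici.mp hx) with h|hx0
    · subst h
      unfold ContinuousWithinAt
      rw [hσ0, show Set.Ici (0:ℝ) = insert 0 (Set.Ioi 0) from Set.Ioi_insert.symm,
        nhdsWithin_insert, tendsto_sup]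
      constructor
      · have := tendsto_pure_nhds σ 0
        rwa [hσ0] at this
      · have h1 : Tendsto (fun r : ℝ => Real.exp (T (Real.log r))) (𝓝[>] (0:ℝ)) (𝓝 0) :=
          Real.tendsto_exp_atBot.comp (hTbot.comp Real.tendsto_log_nhdsGT_zero)
        apply h1.congr'
        filter_upwards [eventually_mem_nhdsWithin] with r hr
        exact (hσpos r (mem_Ioi.mp hr)).symm
    · have hca : ContinuousAt (fun r : ℝ => Real.exp (T (Real.log r))) x :=
        Real.continuous_exp.continuousAt.comp
          (hTcont.continuousAt.comp (Real.continuousAt_log hx0.ne'))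
      refine (hca.congr ?_).continuousWithinAt
      filter_upwards [eventually_gt_nhds hx0] with r hr
      exact (hσpos r hr).symm
  · -- StrictMonoOn
    intro x hx y hy hxy
    rcases eq_or_lt_of_le (mem_Ici.mp hx) with h|hx0
    · subst h
      rw [hσ0, hσpos y hxy]
      exact Real.exp_pos _
    · rw [hσpos x hx0, hσpos y (hx0.trans hxy)]
      exact Real.exp_lt_exp.mpr (hTsm (Real.log_lt_log hx0 hxy))
  · -- Tendsto atTop
    have h1 : Tendsto (fun r : ℝ => Real.exp (T (Real.log r))) atTop atTop :=
      Real.tendsto_exp_atTop.comp (hTtop.comp Real.tendsto_log_atTop)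
    apply h1.congr'
    filter_upwards [eventually_gt_atTop (0:ℝ)] with r hr
    exact (hσpos r hr).symm
  · -- main inequality
    intro r s hr hs
    rcases eq_or_lt_of_le hr with h|hr0
    · subst h
      rw [zero_mul, h00, hσ0, zero_mul]
    · rcases eq_or_lt_of_le hs with h|hs0
      · subst h
        rw [mul_zero, h00, hσ0, mul_zero]
      · set a := Real.log r with ha
        set b := Real.log s with hb
        have hγrs : 0 < γ (r*s) := hγpos _ (mul_pos hr0 hs0)
        have hg1 : g ((a+b)/2) ≤ (τ a + τ b)/2 := le_trans (hgle _) (hmid a b)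
        have hgeq : g ((a+b)/2) = Real.log (γ (r*s)) / 2 := by
          simp only [hgdef]
          congr 2
          rw [show 2*((a+b)/2) = a + b by ring, Real.exp_add, ha, hb,
            Real.exp_log hr0, Real.exp_log hs0]
        have hkey : Real.log (γ (r*s)) ≤ τ a + τ b := by
          rw [hgeq] at hg1
          linarith
        calc γ (r*s) = Real.exp (Real.log (γ (r*s))) := (Real.exp_log hγrs).symm
          _ ≤ Real.exp (τ a + τ b) := Real.exp_le_exp.mpr hkey
          _ ≤ Real.exp (T a + T b) := by
              apply Real.exp_le_exp.mpr
              simp only [hT]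
              linarith [Real.exp_pos a, Real.exp_pos b]
          _ = σ r * σ s := by
              rw [hσpos r hr0, hσpos s hs0, Real.exp_add]
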